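/- arXiv:1901.01090 — 2 statements merged into one kernel-verified Lean document; each statement's English description precedes it below -/
import Mathlib

section
/- For every simple graph G and all d, d' ≥ 1, there exists a graph homomorphism (G/d') ⋉ d → (G ⋉ d)/d'. -/
open SimpleGraph

universe u v

/-- The join `G + H` of two simple graphs. -/
def graphJoin {α : Type u} {β : Type v} (G : SimpleGraph α) (H : SimpleGraph β) :
    SimpleGraph (α ⊕ β) where
  Adj x y :=
    match x, y with
    | Sum.inl a, Sum.inl a' => G.Adj a a'
    | Sum.inr b, Sum.inr b' => H.Adj b b'
    | Sum.inl _, Sum.inr _ => True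
    | Sum.inr _, Sum.inl _ => True
  symm := by
    constructor
    rintro (a | b) (a' | b') h
    · exact G.adj_symm h
    · trivial
    · trivial
    · exact H.adj_symm h
  loopless := by
    constructor
    rintro (a | b) h
    · exact G.irrefl h
    · exact H.irrefl h

/-- The disjunctive product `G * H`. -/
def disjProd {α : Type u} {β : Type v} (G : SimpleGraph α) (H : SimpleGraph β) :
    SimpleGraph (α × β) where
  Adj p q := G.Adj p.1 q.1 ∨ H.Adj p.2 q.2
  symm := ⟨fun p q h => h.imp (fun h' => G.adj_symm h') (fun h' => H.adj_symm h')⟩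
  loopless := ⟨fun p h => h.elim (fun h' => G.irrefl h') (fun h' => H.irrefl h')⟩

/-- The lexicographic product `G ⋉ H`. -/
def lexProd {α : Type u} {β : Type v} (G : SimpleGraph α) (H : SimpleGraph β) :
    SimpleGraph (α × β) where
  Adj p q := G.Adj p.1 q.1 ∨ (p.1 = q.1 ∧ H.Adj p.2 q.2)
  symm := ⟨fun p q h => h.imp (fun h' => G.adj_symm h') (fun h' => ⟨h'.1.symm, H.adj_symm h'.2⟩)⟩
  loopless := ⟨fun p h => h.elim (fun h' => G.irrefl h') (fun h' => H.irrefl h'.2)⟩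

/-- The `d`-fold blowup `G ⋉ d`, i.e. the lexicographic product `G ⋉ K_d`. -/
def blowup {α : Type u} (G : SimpleGraph α) (d : ℕ) : SimpleGraph (α × Fin d) :=
  lexProd G (⊤ : SimpleGraph (Fin d))

/-- The `d`-fractionalization `G/d`: the graph of `d`-cliques of `G`, with two
`d`-cliques adjacent iff they are disjoint and pairwise adjacent. -/
def fracGraph {α : Type u} (G : SimpleGraph α) (d : ℕ) :
    SimpleGraph {S : Finset α // S.card = d ∧ G.IsClique (S : Set α)} where
  Adj S T := S ≠ T ∧ Disjoint S.val T.val ∧ ∀ a ∈ S.val, ∀ b ∈ T.val, G.Adj a b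
  symm := by
    constructor
    rintro S T ⟨hne, hd, hadj⟩
    exact ⟨hne.symm, hd.symm, fun b hb a ha => (hadj a ha b hb).symm⟩
  loopless := ⟨fun S h => h.1 rfl⟩

/-- The `n`-fold disjunctive power `G^{*n}`. -/
def disjPow {α : Type u} (G : SimpleGraph α) (n : ℕ) :
    SimpleGraph (Fin n → α) where
  Adj f g := ∃ i, G.Adj (f i) (g i)
  symm := ⟨fun f g ⟨i, h⟩ => ⟨i, h.symm⟩⟩
  loopless := ⟨fun f ⟨i, h⟩ => G.irrefl h⟩

/-- A semiring family of graphs. -/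
structure SemiringFamily where
  V : ℕ → Type u
  F : ∀ n, SimpleGraph (V n)
  isEmpty_zero : IsEmpty (V 0)
  nonempty_one : Nonempty (V 1)
  add_hom : ∀ n m : ℕ, Nonempty (graphJoin (F n) (F m) →g F (n + m))
  mul_hom : ∀ n m : ℕ, Nonempty (disjProd (F n) (F m) →g F (n * m))

/-- The `F`-number: the least `n` such that `G → F_n`. -/
noncomputable def etaF (F : SemiringFamily.{u}) {α : Type v} (G : SimpleGraph α) : ℕ :=
  sInf {n : ℕ | Nonempty (G →g F.F n)}

/-- The fractional `F`-number. -/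
noncomputable def etaFrac (F : SemiringFamily.{u}) {α : Type v} (G : SimpleGraph α) : ℝ :=
  sInf {x : ℝ | ∃ n d : ℕ, 1 ≤ d ∧ Nonempty (G →g fracGraph (F.F n) d) ∧ x = (n : ℝ) / d}

/-- The asymptotic `F`-number. -/
noncomputable def etaAsymp (F : SemiringFamily.{u}) {α : Type v} (G : SimpleGraph α) : ℝ :=
  sInf {x : ℝ | ∃ n : ℕ, 1 ≤ n ∧ x = (etaF F (disjPow G n) : ℝ) ^ ((1 : ℝ) / n)}

/-- The orthogonal complement of a set of vertices. -/
def perp {α : Type u} (G : SimpleGraph α) (S : Set α) : Set α :=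
  {v | ∀ s ∈ S, G.Adj v s}

/-- A flat is a set of vertices with `S^{⊥⊥} = S`. -/
def IsFlat {α : Type u} (G : SimpleGraph α) (S : Set α) : Prop :=
  perp G (perp G S) = S

/-- Homomorphic equivalence of two graphs. -/
def HomEquiv {α : Type u} {β : Type v} (G : SimpleGraph α) (H : SimpleGraph β) : Prop :=
  Nonempty (G →g H) ∧ Nonempty (H →g G)

/-- A linear-like semiring family: every flat of `F_n` induces a subgraph with some
clique number `k`, homomorphically equivalent to `F_k`. -/
structure LinearLikeFamily extends SemiringFamily where
  linearLike : ∀ n (S : Set (V n)), IsFlat (F n) S →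
    ∃ k : ℕ, (∃ s : Finset S, ((F n).induce S).IsNClique k s) ∧
      (∀ s : Finset S, ¬ ((F n).induce S).IsNClique (k + 1) s) ∧
      HomEquiv ((F n).induce S) (F k)

/-- There is a graph homomorphism `(G/d') ⋉ d → (G ⋉ d)/d'`. -/
theorem blowup_fracGraph_hom {α : Type u} (G : SimpleGraph α) (d d' : ℕ)
    (hd : 1 ≤ d) (hd' : 1 ≤ d') :
    Nonempty (blowup (fracGraph G d') d →g fracGraph (blowup G d) d') := by
  classical
  have hinj : ∀ i : Fin d, Function.Injective (fun a : α => (a, i)) := by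
    intro i a b h; exact (Prod.mk.injEq _ _ _ _ ▸ h).1
  refine ⟨⟨fun p => ⟨p.1.val.image (fun a => (a, p.2)), ?_, ?_⟩, ?_⟩⟩
  · rw [Finset.card_image_of_injective _ (hinj p.2)]
    exact p.1.prop.1
  · rintro ⟨a, i⟩ ha ⟨b, j⟩ hb hne
    simp only [Finset.coe_image, Set.mem_image, Finset.mem_coe] at ha hb
    obtain ⟨a', ha', ha2⟩ := ha
    obtain ⟨b', hb', hb2⟩ := hb
    cases ha2; cases hb2
    have hab : a ≠ b := fun h => hne (by subst h; rfl)
    exact Or.inl (p.1.prop.2 ha' hb' hab)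
  · rintro ⟨S, i⟩ ⟨T, j⟩ hadj
    obtain ⟨hS, hScard, hSclique⟩ := S
    obtain ⟨hT, hTcard, hTclique⟩ := T
    simp only [blowup, lexProd] at hadj
    have hSne : hS.Nonempty := Finset.card_pos.mp (hScard ▸ hd')
    rcases hadj with hadj | ⟨heq, hij⟩
    · obtain ⟨hne, hdisj, hall⟩ := hadj
      refine ⟨?_, ?_, ?_⟩
      · intro h
        obtain ⟨a, ha⟩ := hSne
        have : (a, i) ∈ hT.image (fun a => (a, j)) := by
          have h' := congrArg Subtype.val h
          simp only at h'
          rw [← h']; exact Finset.mem_image_of_mem _ ha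
        simp only [Finset.mem_image] at this
        obtain ⟨b, hb, hb2⟩ := this
        have : a ∈ hS ∧ a ∈ hT := ⟨ha, (Prod.mk.injEq _ _ _ _ ▸ hb2).1 ▸ hb⟩
        exact (Finset.disjoint_left.mp hdisj this.1) this.2
      · rw [Finset.disjoint_left]
        rintro ⟨a, k⟩ ha hb
        simp only [Finset.mem_image] at ha hb
        obtain ⟨a', ha', ha2⟩ := ha
        obtain ⟨b', hb', hb2⟩ := hb
        have : a' = b' := by
          have e1 := (Prod.mk.injEq _ _ _ _ ▸ ha2).1
          have e2 := (Prod.mk.injEq _ _ _ _ ▸ hb2).1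
          rw [e1, e2]
        have hmem := Finset.disjoint_left.mp (by
          have hne2 : (⟨hS, hScard, hSclique⟩ : {S : Finset α // S.card = d' ∧ G.IsClique (S : Set α)}) ≠ ⟨hT, hTcard, hTclique⟩ := hne
          exact hdisj) ha'
        exact hmem (this ▸ hb')
      · rintro ⟨a, k⟩ ha ⟨b, l⟩ hb
        simp only [Finset.mem_image] at ha hb
        obtain ⟨a', ha', ha2⟩ := ha
        obtain ⟨b', hb', hb2⟩ := hb
        have e1 := (Prod.mk.injEq _ _ _ _ ▸ ha2).1
        have e2 := (Prod.mk.injEq _ _ _ _ ▸ hb2).1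
        exact Or.inl (e1 ▸ e2 ▸ hall a' ha' b' hb')
    · cases heq
      refine ⟨?_, ?_, ?_⟩
      · intro h
        obtain ⟨a, ha⟩ := hSne
        have h' := congrArg Subtype.val h
        simp only at h'
        have : (a, i) ∈ hS.image (fun a => (a, j)) := by
          rw [← h']; exact Finset.mem_image_of_mem _ ha
        simp only [Finset.mem_image] at this
        obtain ⟨b, hb, hb2⟩ := this
        exact hij (Prod.mk.injEq _ _ _ _ ▸ hb2).2.symm
      · rw [Finset.disjoint_left]
        rintro ⟨a, k⟩ ha hb
        simp only [Finset.mem_image] at ha hb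
        obtain ⟨a', ha', ha2⟩ := ha
        obtain ⟨b', hb', hb2⟩ := hb
        have e1 := (Prod.mk.injEq _ _ _ _ ▸ ha2).2
        have e2 := (Prod.mk.injEq _ _ _ _ ▸ hb2).2
        exact hij (e1.trans e2.symm)
      · rintro ⟨a, k⟩ ha ⟨b, l⟩ hb
        simp only [Finset.mem_image] at ha hb
        obtain ⟨a', ha', ha2⟩ := ha
        obtain ⟨b', hb', hb2⟩ := hb
        have ea := (Prod.mk.injEq _ _ _ _ ▸ ha2).1
        have eb := (Prod.mk.injEq _ _ _ _ ▸ hb2).1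
        have ei := (Prod.mk.injEq _ _ _ _ ▸ ha2).2
        have ej := (Prod.mk.injEq _ _ _ _ ▸ hb2).2
        by_cases hab : a' = b'
        · refine Or.inr ⟨by rw [← ea, ← eb, hab], ?_⟩
          show k ≠ l
          rw [← ei, ← ej]; exact hij
        · exact Or.inl (ea ▸ eb ▸ hSclique ha' hb' hab)
end

section
/- Let (F_n) be a semiring family of graphs and let G and H be finite simple graphs. Then the fractional F-number is subadditive under joins: η_F^frac(G + H) ≤ η_F^frac(G) + η_F^frac(H). -/
open SimpleGraph

universe u v

section Aux

variable {α' : Type*} {β' : Type*} {γ' : Type*}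

lemma hom_injOn_clique {A : SimpleGraph α'} {B : SimpleGraph β'} (φ : A →g B)
    {S : Finset α'} (h : A.IsClique (S : Set α')) : Set.InjOn φ (S : Set α') := by
  intro x hx y hy hxy
  by_contra hne
  exact B.irrefl (hxy ▸ φ.map_adj (h hx hy hne))

lemma clique_image [DecidableEq β'] {A : SimpleGraph α'} {B : SimpleGraph β'} (φ : A →g B)
    {S : Finset α'} (h : A.IsClique (S : Set α')) :
    B.IsClique ((S.image φ : Finset β') : Set β') := by
  intro x hx y hy hne
  simp only [Finset.coe_image, Set.mem_image, Finset.mem_coe] at hx hy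
  obtain ⟨a, ha, rfl⟩ := hx
  obtain ⟨b, hb, rfl⟩ := hy
  exact φ.map_adj (h ha hb (fun h' => hne (by rw [h'])))

lemma card_image_clique [DecidableEq β'] {A : SimpleGraph α'} {B : SimpleGraph β'} (φ : A →g B)
    {S : Finset α'} (h : A.IsClique (S : Set α')) : (S.image φ).card = S.card :=
  Finset.card_image_of_injOn (hom_injOn_clique φ h)

lemma prod_clique {A : SimpleGraph α'} {B : SimpleGraph β'} {S : Finset α'} {T : Finset β'}
    (hS : A.IsClique (S : Set α')) (hT : B.IsClique (T : Set β')) :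
    (disjProd A B).IsClique ((S ×ˢ T : Finset (α' × β')) : Set (α' × β')) := by
  rintro ⟨a, b⟩ hab ⟨a', b'⟩ hab' hne
  simp only [Finset.coe_product, Set.mem_prod, Finset.mem_coe] at hab hab'
  rcases eq_or_ne a a' with rfl | ha
  · refine Or.inr (hT hab.2 hab'.2 ?_)
    intro hb; exact hne (by simp [hb])
  · exact Or.inl (hS hab.1 hab'.1 ha)

/-- The inclusion of `G` into the join `G + H`. -/
def joinInl {G : SimpleGraph α'} {H : SimpleGraph β'} : G →g graphJoin G H :=
  ⟨Sum.inl, fun h => h⟩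

/-- The inclusion of `H` into the join `G + H`. -/
def joinInr {G : SimpleGraph α'} {H : SimpleGraph β'} : H →g graphJoin G H :=
  ⟨Sum.inr, fun h => h⟩

lemma frac_adj_mk {D : SimpleGraph γ'} {k : ℕ} (hk : 1 ≤ k)
    (U W : {S : Finset γ' // S.card = k ∧ D.IsClique (S : Set γ')})
    (h : ∀ u ∈ U.val, ∀ w ∈ W.val, D.Adj u w) : (fracGraph D k).Adj U W := by
  have hdisj : Disjoint U.val W.val := by
    rw [Finset.disjoint_left]
    intro x hxU hxW
    exact D.irrefl (h x hxU x hxW)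
  refine ⟨?_, hdisj, h⟩
  intro hUW
  obtain ⟨u, hu⟩ := Finset.card_pos.mp (by rw [U.2.1]; omega)
  have hu' : u ∈ W.val := by rw [← hUW]; exact hu
  exact (Finset.disjoint_left.mp hdisj hu) hu'

lemma exists_topHom (F : SemiringFamily.{u}) :
    ∀ m, Nonempty ((⊤ : SimpleGraph (Fin m)) →g F.F m) := by
  intro m
  induction m with
  | zero => exact ⟨⟨fun i => i.elim0, fun {a} => a.elim0⟩⟩
  | succ m ih =>
    obtain ⟨φ⟩ := ih
    obtain ⟨v⟩ := F.nonempty_one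
    obtain ⟨ψ⟩ := F.add_hom m 1
    refine ⟨⟨fun i => if h : (i : ℕ) < m then ψ (Sum.inl (φ ⟨i, h⟩)) else ψ (Sum.inr v), ?_⟩⟩
    intro i j hij
    have hij' : i ≠ j := hij
    by_cases hi : (i : ℕ) < m <;> by_cases hj : (j : ℕ) < m
    · simp only [dif_pos hi, dif_pos hj]
      refine ψ.map_adj (?_ : (F.F m).Adj (φ ⟨i, hi⟩) (φ ⟨j, hj⟩))
      refine φ.map_adj ?_
      simp only [top_adj, ne_eq, Fin.mk.injEq]
      intro h
      exact hij' (Fin.ext h)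
    · simp only [dif_pos hi, dif_neg hj]
      exact ψ.map_adj trivial
    · simp only [dif_neg hi, dif_pos hj]
      exact ψ.map_adj trivial
    · exfalso
      have : (i : ℕ) = m := by omega
      have : (j : ℕ) = m := by omega
      exact hij' (Fin.ext (by omega))

lemma exists_nclique (F : SemiringFamily.{u}) (m : ℕ) :
    ∃ C : Finset (F.V m), C.card = m ∧ (F.F m).IsClique (C : Set (F.V m)) := by
  classical
  obtain ⟨φ⟩ := exists_topHom F m
  have htop : (⊤ : SimpleGraph (Fin m)).IsClique ((Finset.univ : Finset (Fin m)) : Set (Fin m)) :=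
    fun x _ y _ hne => hne
  refine ⟨Finset.univ.image φ, ?_, clique_image φ htop⟩
  rw [card_image_clique φ htop, Finset.card_univ, Fintype.card_fin]

lemma key_join_hom (F : SemiringFamily.{u}) {α'' : Type*} {β'' : Type*}
    (G : SimpleGraph α'') (H : SimpleGraph β'')
    {n d m e : ℕ} (hd : 1 ≤ d) (he : 1 ≤ e)
    (f : G →g fracGraph (F.F n) d) (g : H →g fracGraph (F.F m) e) :
    Nonempty (graphJoin G H →g fracGraph (F.F (n * e + m * d)) (d * e)) := by
  classical
  obtain ⟨Ce, hCe_card, hCe_cl⟩ := exists_nclique F e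
  obtain ⟨Cd, hCd_card, hCd_cl⟩ := exists_nclique F d
  obtain ⟨μ₁⟩ := F.mul_hom n e
  obtain ⟨μ₂⟩ := F.mul_hom m d
  obtain ⟨ψ⟩ := F.add_hom (n * e) (m * d)
  set χ₁ : disjProd (F.F n) (F.F e) →g F.F (n * e + m * d) := (ψ.comp joinInl).comp μ₁ with hχ₁
  set χ₂ : disjProd (F.F m) (F.F d) →g F.F (n * e + m * d) := (ψ.comp joinInr).comp μ₂ with hχ₂
  have hde : 1 ≤ d * e := Nat.one_le_iff_ne_zero.mpr (by positivity)
  -- images on the left side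
  have hUcl : ∀ a : α'',
      (F.F (n * e + m * d)).IsClique ((((f a).val ×ˢ Ce).image χ₁ : Finset _) : Set _) :=
    fun a => clique_image χ₁ (prod_clique (f a).2.2 hCe_cl)
  have hUcard : ∀ a : α'', (((f a).val ×ˢ Ce).image χ₁).card = d * e := by
    intro a
    rw [card_image_clique χ₁ (prod_clique (f a).2.2 hCe_cl), Finset.card_product,
      (f a).2.1, hCe_card]
  have hWcl : ∀ b : β'',
      (F.F (n * e + m * d)).IsClique ((((g b).val ×ˢ Cd).image χ₂ : Finset _) : Set _) :=
    fun b => clique_image χ₂ (prod_clique (g b).2.2 hCd_cl)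
  have hWcard : ∀ b : β'', (((g b).val ×ˢ Cd).image χ₂).card = d * e := by
    intro b
    rw [card_image_clique χ₂ (prod_clique (g b).2.2 hCd_cl), Finset.card_product,
      (g b).2.1, hCd_card, Nat.mul_comm]
  -- cross adjacency between left and right images
  have hcross : ∀ (a : α'') (b : β''),
      ∀ u ∈ ((f a).val ×ˢ Ce).image χ₁, ∀ w ∈ ((g b).val ×ˢ Cd).image χ₂,
        (F.F (n * e + m * d)).Adj u w := by
    intro a b u hu w hw
    simp only [Finset.mem_image] at hu hw
    obtain ⟨p, _, rfl⟩ := hu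
    obtain ⟨q, _, rfl⟩ := hw
    exact ψ.map_adj trivial
  refine ⟨⟨fun x => Sum.rec
    (fun a => ⟨((f a).val ×ˢ Ce).image χ₁, hUcard a, hUcl a⟩)
    (fun b => ⟨((g b).val ×ˢ Cd).image χ₂, hWcard b, hWcl b⟩) x, ?_⟩⟩
  rintro (a | b) (a' | b') hadj
  · -- both left
    refine frac_adj_mk hde _ _ ?_
    intro u hu w hw
    simp only [Finset.mem_image] at hu hw
    obtain ⟨⟨s, c⟩, hp, rfl⟩ := hu
    obtain ⟨⟨t, c'⟩, hq, rfl⟩ := hw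
    simp only [Finset.mem_product] at hp hq
    have hAdj : (fracGraph (F.F n) d).Adj (f a) (f a') := f.map_adj hadj
    exact χ₁.map_adj (Or.inl (hAdj.2.2 s hp.1 t hq.1))
  · exact frac_adj_mk hde _ _ (hcross a b')
  · exact (frac_adj_mk hde _ _ (hcross a' b)).symm
  · refine frac_adj_mk hde _ _ ?_
    intro u hu w hw
    simp only [Finset.mem_image] at hu hw
    obtain ⟨⟨s, c⟩, hp, rfl⟩ := hu
    obtain ⟨⟨t, c'⟩, hq, rfl⟩ := hw
    simp only [Finset.mem_product] at hp hq
    have hAdj : (fracGraph (F.F m) e).Adj (g b) (g b') := g.map_adj hadj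
    exact χ₂.map_adj (Or.inl (hAdj.2.2 s hp.1 t hq.1))

lemma etaFracSet_nonempty (F : SemiringFamily.{u}) {α'' : Type*} [Fintype α'']
    (G : SimpleGraph α'') :
    ∃ x, ∃ n d : ℕ, 1 ≤ d ∧ Nonempty (G →g fracGraph (F.F n) d) ∧ x = (n : ℝ) / d := by
  classical
  set N := Fintype.card α''
  obtain ⟨φ⟩ := exists_topHom F N
  set eqv := Fintype.equivFin α''
  refine ⟨(N : ℝ) / 1, N, 1, le_refl 1, ⟨⟨fun v => ⟨{φ (eqv v)}, by simp, ?_⟩, ?_⟩⟩, by norm_num⟩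
  · simp [SimpleGraph.isClique_iff, Set.pairwise_singleton]
  · intro u v huv
    refine frac_adj_mk (le_refl 1) _ _ ?_
    intro x hx y hy
    simp only [Finset.mem_singleton] at hx hy
    subst hx; subst hy
    refine φ.map_adj ?_
    simp only [top_adj, ne_eq]
    intro h
    exact G.ne_of_adj huv (eqv.injective h)

lemma etaFracSet_bddBelow (F : SemiringFamily.{u}) {γ'' : Type*} (K : SimpleGraph γ'') :
    BddBelow {x : ℝ | ∃ n d : ℕ, 1 ≤ d ∧ Nonempty (K →g fracGraph (F.F n) d) ∧
      x = (n : ℝ) / d} := by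
  refine ⟨0, ?_⟩
  rintro x ⟨n, d, hd, -, rfl⟩
  positivity

end Aux

/-- The fractional `F`-number is subadditive under joins. -/
theorem etaFrac_join_subadditive (F : SemiringFamily.{u}) {α : Type v} {β : Type w}
    [Fintype α] [Fintype β] (G : SimpleGraph α) (H : SimpleGraph β) :
    etaFrac F (graphJoin G H) ≤ etaFrac F G + etaFrac F H := by
  classical
  have hGne : Set.Nonempty
      {x : ℝ | ∃ n d : ℕ, 1 ≤ d ∧ Nonempty (G →g fracGraph (F.F n) d) ∧ x = (n : ℝ) / d} :=
    etaFracSet_nonempty F G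
  have hHne : Set.Nonempty
      {x : ℝ | ∃ n d : ℕ, 1 ≤ d ∧ Nonempty (H →g fracGraph (F.F n) d) ∧ x = (n : ℝ) / d} :=
    etaFracSet_nonempty F H
  refine le_of_forall_pos_le_add fun ε hε => ?_
  obtain ⟨x, hx, hxlt⟩ := Real.lt_sInf_add_pos hGne (half_pos hε)
  obtain ⟨y, hy, hylt⟩ := Real.lt_sInf_add_pos hHne (half_pos hε)
  obtain ⟨n, d, hd, ⟨f⟩, rfl⟩ := hx
  obtain ⟨m, e, he, ⟨g⟩, rfl⟩ := hy
  have hmem : ((n * e + m * d : ℕ) : ℝ) / ((d * e : ℕ) : ℝ) ∈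
      {x : ℝ | ∃ n' d' : ℕ, 1 ≤ d' ∧ Nonempty (graphJoin G H →g fracGraph (F.F n') d') ∧
        x = (n' : ℝ) / d'} := by
    exact ⟨n * e + m * d, d * e, Nat.one_le_iff_ne_zero.mpr (by positivity),
      key_join_hom F G H hd he f g, rfl⟩
  have hle : sInf {x : ℝ | ∃ n' d' : ℕ, 1 ≤ d' ∧
      Nonempty (graphJoin G H →g fracGraph (F.F n') d') ∧ x = (n' : ℝ) / d'} ≤
      ((n * e + m * d : ℕ) : ℝ) / ((d * e : ℕ) : ℝ) :=
    csInf_le (etaFracSet_bddBelow F (graphJoin G H)) hmem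
  have heq : ((n * e + m * d : ℕ) : ℝ) / ((d * e : ℕ) : ℝ) = (n : ℝ) / d + (m : ℝ) / e := by
    have hd0 : (d : ℝ) ≠ 0 := Nat.cast_ne_zero.mpr (by omega)
    have he0 : (e : ℝ) ≠ 0 := Nat.cast_ne_zero.mpr (by omega)
    push_cast
    field_simp
  rw [heq] at hle
  unfold etaFrac
  linarith
end
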